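/- For any vectors v₀, v₁, v₂ ∈ ℝ³ with ‖vᵢ‖₂ ≤ 1 and rᵢ = vᵢ − v_{i+1} − v_{i+2} (indices mod 3), one has Σᵢ₌₀² max(3, ‖rᵢ‖₂) ≤ 11; consequently in the biased 32-Game, p_guess ≤ 1/2 + 11/30 = 13/15 for all quantum (even irreversible) strategies. -/

import Mathlib

open Matrix ComplexOrder

section Aux

lemma aux_trace_mul_eq_sum (B M : Matrix (Fin 2) (Fin 2) ℂ) (hM : M.IsHermitian) :
    (B * M).trace = ∑ i : Fin 2,
      ((star (hM.eigenvectorUnitary : Matrix (Fin 2) (Fin 2) ℂ) * B *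
        (hM.eigenvectorUnitary : Matrix (Fin 2) (Fin 2) ℂ)) i i) * (hM.eigenvalues i : ℂ) := by
  set U : Matrix (Fin 2) (Fin 2) ℂ := (hM.eigenvectorUnitary : Matrix (Fin 2) (Fin 2) ℂ) with hUdef
  have step : (B * M).trace = ((star U * B * U) * diagonal (RCLike.ofReal ∘ hM.eigenvalues)).trace := by
    conv_lhs => rw [hM.spectral_theorem, Unitary.conjStarAlgAut_apply]
    rw [show B * (U * diagonal (RCLike.ofReal ∘ hM.eigenvalues) * star U)
        = (B * U * diagonal (RCLike.ofReal ∘ hM.eigenvalues)) * star U by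
      simp only [mul_assoc]]
    rw [trace_mul_comm, ← mul_assoc, ← mul_assoc]
  rw [step, Matrix.trace]
  simp [Matrix.diag, Matrix.mul_diagonal]

lemma aux_diag_re_nonneg {F : Matrix (Fin 2) (Fin 2) ℂ} (hF : F.PosSemidef) (i : Fin 2) :
    0 ≤ (F i i).re := by
  have h := hF.dotProduct_mulVec_nonneg (Pi.single i 1)
  have he : star (Pi.single i 1 : Fin 2 → ℂ) ⬝ᵥ F *ᵥ Pi.single i 1 = F i i := by
    simp [dotProduct, mulVec, Pi.single_apply]
  rw [he] at h
  exact (Complex.le_def.mp h).1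

lemma aux_conj_psd {E : Matrix (Fin 2) (Fin 2) ℂ} (hE : E.PosSemidef)
    (U : Matrix (Fin 2) (Fin 2) ℂ) : (star U * E * U).PosSemidef := by
  simpa [Matrix.star_eq_conjTranspose] using hE.conjTranspose_mul_mul_same U

lemma aux_trace_re_eq_sum_eig (M : Matrix (Fin 2) (Fin 2) ℂ) (hM : M.IsHermitian) :
    M.trace.re = hM.eigenvalues 0 + hM.eigenvalues 1 := by
  have h := aux_trace_mul_eq_sum 1 M hM
  rw [one_mul] at h
  have hU : (star (hM.eigenvectorUnitary : Matrix (Fin 2) (Fin 2) ℂ)) * 1 *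
      (hM.eigenvectorUnitary : Matrix (Fin 2) (Fin 2) ℂ) = 1 := by
    rw [mul_one]; exact Unitary.coe_star_mul_self hM.eigenvectorUnitary
  rw [hU] at h
  rw [h]
  simp [Fin.sum_univ_two, Matrix.one_apply]

lemma aux_trace_sq_re (M : Matrix (Fin 2) (Fin 2) ℂ) (hM : M.IsHermitian) :
    (M * M).trace.re = hM.eigenvalues 0 ^ 2 + hM.eigenvalues 1 ^ 2 := by
  have h := aux_trace_mul_eq_sum M M hM
  rw [show star (hM.eigenvectorUnitary : Matrix (Fin 2) (Fin 2) ℂ) * M *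
      (hM.eigenvectorUnitary : Matrix (Fin 2) (Fin 2) ℂ) = diagonal (RCLike.ofReal ∘ hM.eigenvalues) by
    have hs := hM.spectral_theorem
    rw [Unitary.conjStarAlgAut_apply] at hs
    have hU := Unitary.coe_star_mul_self hM.eigenvectorUnitary
    calc _ = star (hM.eigenvectorUnitary : Matrix (Fin 2) (Fin 2) ℂ) *
          ((hM.eigenvectorUnitary : Matrix (Fin 2) (Fin 2) ℂ) * diagonal (RCLike.ofReal ∘ hM.eigenvalues) *
            star (hM.eigenvectorUnitary : Matrix (Fin 2) (Fin 2) ℂ)) *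
          (hM.eigenvectorUnitary : Matrix (Fin 2) (Fin 2) ℂ) := by rw [← hs]
      _ = _ := by
        simp only [← mul_assoc, hU, one_mul]
        rw [mul_assoc, hU, mul_one]] at h
  rw [h]
  simp [Fin.sum_univ_two, Matrix.diagonal_apply_eq]
  ring

lemma aux_povm_trace_le (E M : Matrix (Fin 2) (Fin 2) ℂ) (hE : E.PosSemidef)
    (hE' : (1 - E).PosSemidef) (hM : M.IsHermitian) :
    (E * M).trace.re ≤ max 0 (hM.eigenvalues 0) + max 0 (hM.eigenvalues 1) := by
  set U : Matrix (Fin 2) (Fin 2) ℂ := (hM.eigenvectorUnitary : Matrix (Fin 2) (Fin 2) ℂ) with hUdef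
  have hU : star U * U = 1 := Unitary.coe_star_mul_self hM.eigenvectorUnitary
  have h := aux_trace_mul_eq_sum E M hM
  set F : Matrix (Fin 2) (Fin 2) ℂ := star U * E * U with hFdef
  have hFpsd : F.PosSemidef := aux_conj_psd hE U
  have hF1 : (1 - F).PosSemidef := by
    have heq : star U * (1 - E) * U = 1 - F := by
      rw [mul_sub, sub_mul, mul_one, hU, hFdef]
    rw [← heq]; exact aux_conj_psd hE' U
  have hdiag : ∀ i, 0 ≤ (F i i).re ∧ (F i i).re ≤ 1 := by
    intro i
    refine ⟨aux_diag_re_nonneg hFpsd i, ?_⟩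
    have h2 := aux_diag_re_nonneg hF1 i
    have h3 : ((1 - F) i i).re = 1 - (F i i).re := by
      simp [Matrix.sub_apply, Matrix.one_apply]
    linarith [h3 ▸ h2]
  have hre : (E * M).trace.re = ∑ i : Fin 2, (F i i).re * hM.eigenvalues i := by
    rw [h, Complex.re_sum]
    congr 1; ext i
    simp [Complex.mul_re]
  rw [hre, Fin.sum_univ_two]
  have key : ∀ i : Fin 2, (F i i).re * hM.eigenvalues i ≤ max 0 (hM.eigenvalues i) := by
    intro i
    rcases le_total 0 (hM.eigenvalues i) with hl | hl
    · rw [max_eq_right hl]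
      nlinarith [(hdiag i).1, (hdiag i).2]
    · rw [max_eq_left (by linarith)]
      nlinarith [(hdiag i).1]
  linarith [key 0, key 1]

lemma aux_purity_le (ρ : Matrix (Fin 2) (Fin 2) ℂ) (hρ : ρ.PosSemidef) (ht : ρ.trace = 1) :
    (ρ * ρ).trace.re ≤ 1 := by
  have h := aux_trace_sq_re ρ hρ.1
  have hsum := aux_trace_re_eq_sum_eig ρ hρ.1
  rw [ht] at hsum
  simp at hsum
  have h0 := hρ.eigenvalues_nonneg 0
  have h1 := hρ.eigenvalues_nonneg 1
  nlinarith

lemma aux_mixed_bounds (ρ τ : Matrix (Fin 2) (Fin 2) ℂ) (hρ : ρ.PosSemidef) (hτ : τ.PosSemidef)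
    (htρ : ρ.trace = 1) (htτ : τ.trace = 1) :
    0 ≤ (ρ * τ).trace.re ∧ (ρ * τ).trace.re ≤ 1 := by
  set U : Matrix (Fin 2) (Fin 2) ℂ := (hτ.1.eigenvectorUnitary : Matrix (Fin 2) (Fin 2) ℂ) with hUdef
  have h := aux_trace_mul_eq_sum ρ τ hτ.1
  set F : Matrix (Fin 2) (Fin 2) ℂ := star U * ρ * U with hFdef
  have hFpsd : F.PosSemidef := aux_conj_psd hρ U
  have hf0 := aux_diag_re_nonneg hFpsd 0
  have hf1 := aux_diag_re_nonneg hFpsd 1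
  have htrF : F.trace = 1 := by
    have hUU : U * star U = 1 := Unitary.coe_mul_star_self hτ.1.eigenvectorUnitary
    rw [hFdef, trace_mul_comm, ← mul_assoc, hUU, one_mul, htρ]
  have hfs : (F 0 0).re + (F 1 1).re = 1 := by
    have h5 : F.trace.re = 1 := by rw [htrF]; simp
    rwa [Matrix.trace, Fin.sum_univ_two, Complex.add_re] at h5
  have hl0 := hτ.eigenvalues_nonneg 0
  have hl1 := hτ.eigenvalues_nonneg 1
  have hls : hτ.1.eigenvalues 0 + hτ.1.eigenvalues 1 = 1 := by
    have h6 := aux_trace_re_eq_sum_eig τ hτ.1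
    rw [htτ] at h6; simpa using h6.symm
  have hre : (ρ * τ).trace.re = (F 0 0).re * hτ.1.eigenvalues 0 + (F 1 1).re * hτ.1.eigenvalues 1 := by
    rw [h, Complex.re_sum, Fin.sum_univ_two]
    simp [Complex.mul_re]
  rw [hre]
  constructor
  · positivity
  · nlinarith

lemma aux_perM (A B C Ea : Matrix (Fin 2) (Fin 2) ℂ)
    (hA : A.PosSemidef) (hB : B.PosSemidef) (hC : C.PosSemidef)
    (tA : A.trace = 1) (tB : B.trace = 1) (tC : C.trace = 1)
    (hEa : Ea.PosSemidef) (hEa' : (1 - Ea).PosSemidef) :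
    ∃ x y : ℝ, x + y = -3 ∧
      x ^ 2 + y ^ 2 = (A * A).trace.re + 4 * (B * B).trace.re + 4 * (C * C).trace.re
        - 4 * (A * B).trace.re - 4 * (A * C).trace.re + 8 * (B * C).trace.re ∧
      (Ea * (A - (B + B) - (C + C))).trace.re ≤ max 0 x + max 0 y := by
  set M : Matrix (Fin 2) (Fin 2) ℂ := A - (B + B) - (C + C) with hMdef
  have hMh : M.IsHermitian := (hA.1.sub (hB.1.add hB.1)).sub (hC.1.add hC.1)
  refine ⟨hMh.eigenvalues 0, hMh.eigenvalues 1, ?_, ?_, aux_povm_trace_le _ _ hEa hEa' hMh⟩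
  · have h1 := aux_trace_re_eq_sum_eig M hMh
    have h2 : M.trace = -3 := by
      rw [hMdef, trace_sub, trace_sub, trace_add, trace_add, tA, tB, tC]; ring
    rw [h2] at h1
    simpa using h1.symm
  · have h2 := aux_trace_sq_re M hMh
    have hexp : (M * M).trace = (A * A).trace + 4 * (B * B).trace + 4 * (C * C).trace
        - 4 * (A * B).trace - 4 * (A * C).trace + 8 * (B * C).trace := by
      rw [hMdef]
      simp only [sub_mul, mul_sub, add_mul, mul_add, trace_sub, trace_add,
        trace_mul_comm B A, trace_mul_comm C A, trace_mul_comm C B]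
      ring
    have hexp' := congrArg Complex.re hexp
    simp only [Complex.add_re, Complex.sub_re, Complex.mul_re, Complex.re_ofNat,
      Complex.im_ofNat, zero_mul, sub_zero] at hexp'
    rw [h2] at hexp'
    linarith [hexp']

lemma aux_pair_max (x y : ℝ) (h : x + y = -3) :
    0 ≤ max 0 x + max 0 y ∧
    (max 0 x + max 0 y = 0 ∨
      x ^ 2 + y ^ 2 = 2 * (max 0 x + max 0 y) ^ 2 + 6 * (max 0 x + max 0 y) + 9) ∧
    2 * (max 0 x + max 0 y) ^ 2 + 6 * (max 0 x + max 0 y) + 9 / 2 ≤ x ^ 2 + y ^ 2 := by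
  rcases le_total x 0 with hx | hx <;> rcases le_total y 0 with hy | hy
  · rw [max_eq_left hx, max_eq_left hy]
    exact ⟨by norm_num, Or.inl (by norm_num), by nlinarith [sq_nonneg (x - y)]⟩
  · rw [max_eq_left hx, max_eq_right hy]
    exact ⟨by linarith, Or.inr (by nlinarith), by nlinarith⟩
  · rw [max_eq_right hx, max_eq_left hy]
    exact ⟨by linarith, Or.inr (by nlinarith), by nlinarith⟩
  · exfalso; linarith

lemma aux_key_scalar (e0 e1 e2 q0 q1 q2 : ℝ)
    (h0 : 0 ≤ e0) (h1 : 0 ≤ e1) (h2 : 0 ≤ e2)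
    (c0 : e0 = 0 ∨ q0 = 2 * e0 ^ 2 + 6 * e0 + 9)
    (c1 : e1 = 0 ∨ q1 = 2 * e1 ^ 2 + 6 * e1 + 9)
    (c2 : e2 = 0 ∨ q2 = 2 * e2 ^ 2 + 6 * e2 + 9)
    (g0 : 2 * e0 ^ 2 + 6 * e0 + 9 / 2 ≤ q0)
    (g1 : 2 * e1 ^ 2 + 6 * e1 + 9 / 2 ≤ q1)
    (g2 : 2 * e2 ^ 2 + 6 * e2 + 9 / 2 ≤ q2)
    (hq0 : q0 ≤ 17) (hq1 : q1 ≤ 17) (hq2 : q2 ≤ 17)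
    (hs : q0 + q1 + q2 ≤ 27) : e0 + e1 + e2 ≤ 1 := by
  rcases c0 with c0 | c0 <;> rcases c1 with c1 | c1 <;> rcases c2 with c2 | c2
  · linarith
  · nlinarith [sq_nonneg (e2 - 1)]
  · nlinarith [sq_nonneg (e1 - 1)]
  · nlinarith [sq_nonneg (e1 - e2), sq_nonneg (e1 + e2 - 1)]
  · nlinarith [sq_nonneg (e0 - 1)]
  · nlinarith [sq_nonneg (e0 - e2), sq_nonneg (e0 + e2 - 1)]
  · nlinarith [sq_nonneg (e0 - e1), sq_nonneg (e0 + e1 - 1)]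
  · nlinarith [sq_nonneg e0, sq_nonneg e1, sq_nonneg e2]

end Aux

/-- For unit-ball vectors v₀,v₁,v₂ ∈ ℝ³ with rᵢ = vᵢ − v_{i+1} − v_{i+2}
(indices mod 3), Σᵢ max(3, ‖rᵢ‖) ≤ 11; consequently, in the biased 32-Game
(prior 1/15 on a=b, 2/15 on a≠b), every quantum (even irreversible) strategy —
Alice sending density matrices ρ_a, Bob measuring POVM elements 0 ≤ E_b ≤ I —
guesses correctly with probability at most 1/2 + 11/30 = 13/15. -/
theorem stmt_19 :
    (∀ v : Fin 3 → EuclideanSpace ℝ (Fin 3), (∀ i, ‖v i‖ ≤ 1) →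
      (∑ i : Fin 3, max 3 ‖v i - v (i + 1) - v (i + 2)‖) ≤ 11) ∧
    (∀ ρ : Fin 3 → Matrix (Fin 2) (Fin 2) ℂ,
      (∀ i, (ρ i).PosSemidef) → (∀ i, (ρ i).trace = 1) →
      ∀ E : Fin 3 → Matrix (Fin 2) (Fin 2) ℂ,
      (∀ b, (E b).PosSemidef) → (∀ b, (1 - E b).PosSemidef) →
      (∑ a : Fin 3, ∑ b : Fin 3,
          (if a = b then (1 / 15 : ℝ) else 2 / 15) *
            (if a = b then (E b * ρ a).trace.re else ((1 - E b) * ρ a).trace.re))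
        ≤ 1 / 2 + 11 / 30) := by
  constructor
  · intro v hv
    have h : ∀ i : Fin 3, max 3 ‖v i - v (i + 1) - v (i + 2)‖ = (3 : ℝ) := by
      intro i
      apply max_eq_left
      calc ‖v i - v (i + 1) - v (i + 2)‖
          ≤ ‖v i - v (i + 1)‖ + ‖v (i + 2)‖ := norm_sub_le _ _
        _ ≤ ‖v i‖ + ‖v (i + 1)‖ + ‖v (i + 2)‖ := by
            linarith [norm_sub_le (v i) (v (i + 1))]
        _ ≤ 3 := by linarith [hv i, hv (i + 1), hv (i + 2)]
    rw [Fin.sum_univ_three, h 0, h 1, h 2]; norm_num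
  · intro ρ hρ htr E hE hE'
    obtain ⟨x0, y0, hxy0, hq0, hle0⟩ := aux_perM (ρ 0) (ρ 1) (ρ 2) (E 0)
      (hρ 0) (hρ 1) (hρ 2) (htr 0) (htr 1) (htr 2) (hE 0) (hE' 0)
    obtain ⟨x1, y1, hxy1, hq1, hle1⟩ := aux_perM (ρ 1) (ρ 2) (ρ 0) (E 1)
      (hρ 1) (hρ 2) (hρ 0) (htr 1) (htr 2) (htr 0) (hE 1) (hE' 1)
    obtain ⟨x2, y2, hxy2, hq2, hle2⟩ := aux_perM (ρ 2) (ρ 0) (ρ 1) (E 2)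
      (hρ 2) (hρ 0) (hρ 1) (htr 2) (htr 0) (htr 1) (hE 2) (hE' 2)
    have p0 := aux_purity_le (ρ 0) (hρ 0) (htr 0)
    have p1 := aux_purity_le (ρ 1) (hρ 1) (htr 1)
    have p2 := aux_purity_le (ρ 2) (hρ 2) (htr 2)
    have m01 := aux_mixed_bounds (ρ 0) (ρ 1) (hρ 0) (hρ 1) (htr 0) (htr 1)
    have m02 := aux_mixed_bounds (ρ 0) (ρ 2) (hρ 0) (hρ 2) (htr 0) (htr 2)
    have m12 := aux_mixed_bounds (ρ 1) (ρ 2) (hρ 1) (hρ 2) (htr 1) (htr 2)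
    have c01 : (ρ 1 * ρ 0).trace.re = (ρ 0 * ρ 1).trace.re := by rw [trace_mul_comm]
    have c02 : (ρ 2 * ρ 0).trace.re = (ρ 0 * ρ 2).trace.re := by rw [trace_mul_comm]
    have c12 : (ρ 2 * ρ 1).trace.re = (ρ 1 * ρ 2).trace.re := by rw [trace_mul_comm]
    have hq0' : x0 ^ 2 + y0 ^ 2 ≤ 17 := by
      rw [hq0]; linarith [m01.1, m01.2, m02.1, m02.2, m12.1, m12.2]
    have hq1' : x1 ^ 2 + y1 ^ 2 ≤ 17 := by
      rw [hq1, c01, c02]; linarith [m01.1, m01.2, m02.1, m02.2, m12.1, m12.2]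
    have hq2' : x2 ^ 2 + y2 ^ 2 ≤ 17 := by
      rw [hq2, c02, c12]; linarith [m01.1, m01.2, m02.1, m02.2, m12.1, m12.2]
    have hsum27 : x0 ^ 2 + y0 ^ 2 + (x1 ^ 2 + y1 ^ 2) + (x2 ^ 2 + y2 ^ 2) ≤ 27 := by
      rw [hq0, hq1, hq2, c01, c02, c12]; linarith
    obtain ⟨he0, hc0, hg0⟩ := aux_pair_max x0 y0 hxy0
    obtain ⟨he1, hc1, hg1⟩ := aux_pair_max x1 y1 hxy1
    obtain ⟨he2, hc2, hg2⟩ := aux_pair_max x2 y2 hxy2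
    have key := aux_key_scalar (max 0 x0 + max 0 y0) (max 0 x1 + max 0 y1)
      (max 0 x2 + max 0 y2) (x0 ^ 2 + y0 ^ 2) (x1 ^ 2 + y1 ^ 2) (x2 ^ 2 + y2 ^ 2)
      he0 he1 he2 hc0 hc1 hc2 hg0 hg1 hg2 hq0' hq1' hq2' hsum27
    have hexpand : ∀ X A B C : Matrix (Fin 2) (Fin 2) ℂ,
        (X * (A - (B + B) - (C + C))).trace.re
          = (X * A).trace.re - 2 * (X * B).trace.re - 2 * (X * C).trace.re := by
      intro X A B C
      rw [mul_sub, mul_sub, mul_add, mul_add, trace_sub, trace_sub, trace_add, trace_add]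
      simp [Complex.sub_re, Complex.add_re]; ring
    rw [hexpand] at hle0 hle1 hle2
    have hone : ∀ a b : Fin 3, ((1 - E b) * ρ a).trace.re = 1 - (E b * ρ a).trace.re := by
      intro a b
      rw [sub_mul, one_mul, trace_sub, htr a]
      simp [Complex.sub_re]
    simp only [Fin.sum_univ_three]
    norm_num [hone, Fin.ext_iff]
    linarith [hle0, hle1, hle2, key]
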